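/- Let S be a finite nonempty set and c a cost function. Define c' on binom(S,3) ∪ binom(S,2) ∪ {∅} by c'_∅ = (1/2)·Σ_{{p,q,r}∈binom(S,3)} c_{pqr} + Σ_{{p,q}∈binom(S,2)} c_{pq}, c'_{pq} = −c_{pq} + (1/2)·Σ_{r∈S∖{p,q}} c_{pqr} for every {p,q} ∈ binom(S,2), and c'_{pqr} = −2·c_{pqr} for every {p,q,r} ∈ binom(S,3). Then for every partition 𝓡 of S, with x^𝓡 ∈ X_S the feasible vector of 𝓡 (x^𝓡_{pq} = 1 iff p,q lie in the same block), it holds that φ_{c'}(x^𝓡) = (1/2)·Σ_{{R,R',R''}∈binom(𝓡,3)} Σ_{{p,q,r}∈T_{RR'R''}} c_{pqr} + Σ_{{R,R'}∈binom(𝓡,2)} Σ_{{p,q}∈δ(R,R')} c_{pq} + Σ_{{R,R'}∈binom(𝓡,2)} ( Σ_{{p,q,r}∈T_{RRR'}} c_{pqr} + Σ_{{p,q,r}∈T_{RR'R'}} c_{pqr} ). -/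

import Mathlib

open Finset

/-- `binom(S,2)`: the set of 2-element subsets (unordered pairs) of the ground set. -/
def pairs (V : Type*) [Fintype V] [DecidableEq V] : Finset (Finset V) :=
  (univ : Finset V).powersetCard 2

/-- `binom(S,3)`: the set of 3-element subsets (unordered triples) of the ground set. -/
def triples (V : Type*) [Fintype V] [DecidableEq V] : Finset (Finset V) :=
  (univ : Finset V).powersetCard 3

/-- The feasible set `X_S`: maps `x : binom(S,2) → {0,1}` satisfying the triangle
inequalities `x_{pq} + x_{qr} - x_{pr} ≤ 1` for all pairwise distinct `p, q, r`. -/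
def feasible {V : Type*} [Fintype V] [DecidableEq V] (x : Finset V → ℝ) : Prop :=
  (∀ e ∈ pairs V, x e = 0 ∨ x e = 1) ∧
    ∀ p q r : V, p ≠ q → q ≠ r → p ≠ r →
      x {p, q} + x {q, r} - x {p, r} ≤ 1

/-- The cubic objective
`φ_c(x) = Σ_{{p,q,r}} c_{pqr} x_{pq} x_{pr} x_{qr} + Σ_{{p,q}} c_{pq} x_{pq} + c_∅`. -/
def obj {V : Type*} [Fintype V] [DecidableEq V] (c x : Finset V → ℝ) : ℝ :=
  ∑ t ∈ triples V, c t * ∏ e ∈ t.powersetCard 2, x e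
    + ∑ e ∈ pairs V, c e * x e + c ∅

/-- `δ(R)`: the pairs having exactly one element in `R`. -/
def cut {V : Type*} [Fintype V] [DecidableEq V] (R : Finset V) : Finset (Finset V) :=
  (pairs V).filter fun e => (e ∩ R).card = 1

/-- `T_{P'}`: the triples having some 2-element subset in `P'`. -/
def Tof {V : Type*} [Fintype V] [DecidableEq V] (P' : Finset (Finset V)) :
    Finset (Finset V) :=
  (triples V).filter fun t => ∃ e ∈ t.powersetCard 2, e ∈ P'

/-- The feasible vector `x^𝓡` of a partition `𝓡`: `x_{pq} = 1` iff `p` and `q` lie in the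
same block of `𝓡`. -/
def partVec {V : Type*} [Fintype V] [DecidableEq V]
    (P : Finpartition (univ : Finset V)) : Finset V → ℝ :=
  fun e => if ∃ B ∈ P.parts, e ⊆ B then 1 else 0

/-- `T_{ABC}`: the triples `{p,q,r}` with `p ∈ A`, `q ∈ B`, `r ∈ C`. -/
def T3 {V : Type*} [Fintype V] [DecidableEq V] (A B C : Finset V) : Finset (Finset V) :=
  (triples V).filter fun t => ∃ p ∈ A, ∃ q ∈ B, ∃ r ∈ C, t = ({p, q, r} : Finset V)

/-- `δ(A,B)`: the pairs `{p,q}` with `p ∈ A` and `q ∈ B`. -/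
def delta2 {V : Type*} [Fintype V] [DecidableEq V] (A B : Finset V) : Finset (Finset V) :=
  (pairs V).filter fun e => ∃ p ∈ A, ∃ q ∈ B, e = ({p, q} : Finset V)

/-- For an unordered set `s = {A,B,C}` of three blocks, the set `T_{ABC}`
(well defined since `T_{ABC}` is symmetric in `A`, `B`, `C`). -/
def T3set {V : Type*} [Fintype V] [DecidableEq V] (s : Finset (Finset V)) :
    Finset (Finset V) :=
  (triples V).filter fun t =>
    ∃ A ∈ s, ∃ B ∈ s, ∃ C ∈ s, ({A, B, C} : Finset (Finset V)) = s ∧ t ∈ T3 A B C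

/-- For an unordered set `s = {A,B}` of two blocks, the set `δ(A,B)`
(well defined since `δ(A,B)` is symmetric in `A`, `B`). -/
def delta2set {V : Type*} [Fintype V] [DecidableEq V] (s : Finset (Finset V)) :
    Finset (Finset V) :=
  (pairs V).filter fun e =>
    ∃ A ∈ s, ∃ B ∈ s, ({A, B} : Finset (Finset V)) = s ∧ e ∈ delta2 A B

section Aux
variable {V : Type*} [Fintype V] [DecidableEq V]

lemma part_eqq (P : Finpartition (univ : Finset V)) {X : Finset V} {v : V}
    (hX : X ∈ P.parts) (hv : v ∈ X) : X = P.part v :=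
  (P.part_eq_of_mem hX hv).symm

lemma intern_pair (P : Finpartition (univ : Finset V)) (a b : V) :
    (∃ X ∈ P.parts, ({a, b} : Finset V) ⊆ X) ↔ P.part a = P.part b := by
  constructor
  · rintro ⟨X, hX, hsub⟩
    rw [P.part_eq_of_mem hX (hsub (Finset.mem_insert_self a {b})),
      P.part_eq_of_mem hX (hsub (by simp : b ∈ ({a, b} : Finset V)))]
  · intro hab
    refine ⟨P.part a, P.part_mem.2 (mem_univ a), ?_⟩
    intro v hv
    rcases Finset.mem_insert.1 hv with rfl | hv
    · exact P.mem_part (mem_univ v)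
    · rw [Finset.mem_singleton] at hv; subst hv; rw [hab]; exact P.mem_part (mem_univ v)

lemma pc2_triple {p q r : V} (hpq : p ≠ q) (hpr : p ≠ r) (hqr : q ≠ r) :
    ({p, q, r} : Finset V).powersetCard 2
      = ({{p, q}, {p, r}, {q, r}} : Finset (Finset V)) := by
  ext e
  simp only [Finset.mem_powersetCard, Finset.mem_insert, Finset.mem_singleton]
  constructor
  · rintro ⟨hsub, hcard⟩
    obtain ⟨a, b, hab, rfl⟩ := Finset.card_eq_two.1 hcard
    have ha := hsub (Finset.mem_insert_self a {b})
    have hb := hsub (by simp : b ∈ ({a, b} : Finset V))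
    simp only [Finset.mem_insert, Finset.mem_singleton] at ha hb
    rcases ha with rfl | rfl | rfl <;> rcases hb with rfl | rfl | rfl <;>
      simp_all [Finset.pair_comm]
  · rintro (rfl | rfl | rfl) <;>
      refine ⟨?_, Finset.card_pair (by assumption)⟩ <;>
      · intro x hx
        simp only [Finset.mem_insert, Finset.mem_singleton] at hx ⊢
        tauto

lemma distinct_of_eq_triple {a b c p q r : V} (hpq : p ≠ q) (hpr : p ≠ r) (hqr : q ≠ r)
    (heq : ({a, b, c} : Finset V) = {p, q, r}) : a ≠ b ∧ a ≠ c ∧ b ≠ c := by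
  have h3 : ({a, b, c} : Finset V).card = 3 := by
    rw [heq, Finset.card_insert_of_notMem (by simp [hpq, hpr]), Finset.card_pair hqr]
  have key : ∀ x y : V, ∀ s : Finset V, s ⊆ {x, y} → s.card ≤ 2 := by
    intro x y s hs
    refine (Finset.card_le_card hs).trans ?_
    exact (Finset.card_insert_le _ _).trans (by simp)
  refine ⟨?_, ?_, ?_⟩ <;> rintro rfl
  · have := key a c {a, a, c} (by intro x hx; simp at hx ⊢; tauto)
    omega
  · have := key a b {a, b, a} (by intro x hx; simp at hx ⊢; tauto)
    omega
  · have := key a b {a, b, b} (by intro x hx; simp at hx ⊢; tauto)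
    omega

lemma T3_sub (P : Finpartition (univ : Finset V)) {p q r : V} {X Y Z : Finset V}
    (hX : X ∈ P.parts) (hY : Y ∈ P.parts) (hZ : Z ∈ P.parts)
    (hpq : p ≠ q) (hpr : p ≠ r) (hqr : q ≠ r)
    (h : ({p, q, r} : Finset V) ∈ T3 X Y Z) :
    ∃ a b c : V, ({a, b, c} : Finset V) = ({p, q, r} : Finset V) ∧ a ≠ b ∧ a ≠ c ∧ b ≠ c ∧
      X = P.part a ∧ Y = P.part b ∧ Z = P.part c := by
  rw [T3, Finset.mem_filter] at h
  obtain ⟨-, a, ha, b, hb, c, hc, heq⟩ := h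
  obtain ⟨h1, h2, h3⟩ := distinct_of_eq_triple hpq hpr hqr heq.symm
  exact ⟨a, b, c, heq.symm, h1, h2, h3, part_eqq P hX ha, part_eqq P hY hb, part_eqq P hZ hc⟩

lemma pin21 (P : Finpartition (univ : Finset V)) {p q r a b c' : V}
    (hpq : p ≠ q) (hpr : p ≠ r) (hqr : q ≠ r)
    (h2 : P.part p = P.part q) (h1 : P.part p ≠ P.part r)
    (ha : a = p ∨ a = q ∨ a = r) (hb : b = p ∨ b = q ∨ b = r)
    (hc : c' = p ∨ c' = q ∨ c' = r)
    (hab : a ≠ b) (hac : a ≠ c') (hbc : b ≠ c')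
    (hXab : P.part a = P.part b) : P.part a = P.part p ∧ c' = r := by
  have hq2r : P.part q ≠ P.part r := fun h => h1 (h2.trans h)
  rcases ha with rfl | rfl | rfl <;> rcases hb with rfl | rfl | rfl
  · exact absurd rfl hab
  · refine ⟨rfl, ?_⟩
    rcases hc with rfl | rfl | rfl
    · exact absurd rfl hac
    · exact absurd rfl hbc
    · rfl
  · exact absurd hXab h1
  · refine ⟨h2.symm, ?_⟩
    rcases hc with rfl | rfl | rfl
    · exact absurd rfl hbc
    · exact absurd rfl hac
    · rfl
  · exact absurd rfl hab
  · exact absurd hXab hq2r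
  · exact absurd hXab.symm h1
  · exact absurd hXab.symm hq2r
  · exact absurd rfl hab

lemma pindist (P : Finpartition (univ : Finset V)) {p q r a b : V}
    (hq2 : P.part p ≠ P.part q) (hr2 : P.part p ≠ P.part r)
    (hqr2 : P.part q ≠ P.part r)
    (ha : a = p ∨ a = q ∨ a = r) (hb : b = p ∨ b = q ∨ b = r)
    (hab : a ≠ b) (hXab : P.part a = P.part b) : False := by
  rcases ha with rfl | rfl | rfl <;> rcases hb with rfl | rfl | rfl
  · exact hab rfl
  · exact hq2 hXab
  · exact hr2 hXab
  · exact hq2 hXab.symm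
  · exact hab rfl
  · exact hqr2 hXab
  · exact hr2 hXab.symm
  · exact hqr2 hXab.symm
  · exact hab rfl


lemma pair_triple_swap (F : Finset V → Finset V → ℝ) :
    ∑ e ∈ pairs V, ∑ r ∈ univ \ e, F e (insert r e)
      = ∑ t ∈ triples V, ∑ e ∈ t.powersetCard 2, F e t := by
  rw [Finset.sum_sigma', Finset.sum_sigma']
  refine Finset.sum_nbij (fun x => ⟨insert x.2 x.1, x.1⟩) ?_ ?_ ?_ ?_
  · rintro ⟨e, r⟩ h
    simp only [pairs, triples, Finset.mem_sigma, Finset.mem_powersetCard,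
      Finset.mem_sdiff] at h ⊢
    obtain ⟨⟨-, he⟩, -, hre⟩ := h
    refine ⟨⟨Finset.subset_univ _, ?_⟩, ?_, he⟩
    · rw [Finset.card_insert_of_notMem hre, he]
    · exact Finset.subset_insert _ _
  · rintro ⟨e, r⟩ h ⟨e', r'⟩ h' heq
    simp only [pairs, Finset.mem_coe, Finset.mem_sigma, Finset.mem_powersetCard,
      Finset.mem_sdiff] at h h'
    obtain ⟨h1, h2⟩ := Sigma.mk.inj_iff.1 heq
    have he : e = e' := eq_of_heq h2
    subst he
    have : r ∈ insert r' e := h1 ▸ Finset.mem_insert_self r e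
    rcases Finset.mem_insert.1 this with hh | hh
    · subst hh; rfl
    · exact absurd hh h.2.2
  · rintro ⟨t, e⟩ h
    simp only [triples, Finset.mem_coe, Finset.mem_sigma, Finset.mem_powersetCard] at h
    obtain ⟨⟨-, ht⟩, het, he⟩ := h
    have : (t \ e).Nonempty := by
      rw [← Finset.card_pos, Finset.card_sdiff_of_subset het, ht, he]; norm_num
    obtain ⟨r, hr⟩ := this
    rw [Finset.mem_sdiff] at hr
    refine ⟨⟨e, r⟩, ?_, ?_⟩
    · simp only [pairs, Finset.mem_coe, Finset.mem_sigma, Finset.mem_powersetCard,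
        Finset.mem_sdiff]
      exact ⟨⟨Finset.subset_univ _, he⟩, Finset.mem_univ _, hr.2⟩
    · have hsub : insert r e ⊆ t := Finset.insert_subset hr.1 het
      have : insert r e = t := Finset.eq_of_subset_of_card_le hsub (by
        rw [Finset.card_insert_of_notMem hr.2, he, ht])
      simp [this]
  · rintro ⟨e, r⟩ h; rfl

lemma sum_filter_swap {ι α : Type*} (Q : Finset ι) (A : Finset α)
    (p : ι → α → Prop) [∀ i a, Decidable (p i a)] (c : α → ℝ) :
    ∑ s ∈ Q, ∑ y ∈ A.filter (p s), c y
      = ∑ y ∈ A, c y * ((Q.filter fun s => p s y).card : ℝ) := by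
  simp_rw [Finset.sum_filter]
  rw [Finset.sum_comm]
  refine Finset.sum_congr rfl fun y _ => ?_
  rw [← Finset.sum_boole, Finset.mul_sum]
  exact Finset.sum_congr rfl fun s _ => by by_cases h : p s y <;> simp [h]

lemma core_pair (P : Finpartition (univ : Finset V)) (c : Finset V → ℝ) {e : Finset V}
    (he : e ∈ pairs V) :
    (-c e) * (if ∃ B ∈ P.parts, e ⊆ B then (1 : ℝ) else 0) + c e
      = c e * (((P.parts.powersetCard 2).filter fun s => e ∈ delta2set s).card : ℝ) := by
  rw [pairs, Finset.mem_powersetCard] at he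
  obtain ⟨p, q, hpq, rfl⟩ := Finset.card_eq_two.1 he.2
  by_cases h : P.part p = P.part q
  · rw [if_pos ((intern_pair P p q).2 h)]
    have hempty : (P.parts.powersetCard 2).filter
        (fun s => ({p, q} : Finset V) ∈ delta2set s) = ∅ := by
      rw [Finset.filter_eq_empty_iff]
      rintro s hs hmem
      rw [Finset.mem_powersetCard] at hs
      rw [delta2set, Finset.mem_filter] at hmem
      obtain ⟨-, A', hA', B', hB', hs', hd⟩ := hmem
      rw [delta2, Finset.mem_filter] at hd
      obtain ⟨-, p', hp', q', hq', hpq'⟩ := hd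
      have hA'' := part_eqq P (hs.1 hA') hp'
      have hB'' := part_eqq P (hs.1 hB') hq'
      have himg := congrArg (Finset.image P.part) hpq'
      simp only [Finset.image_insert, Finset.image_singleton] at himg
      have hsing : s = {P.part p} := by
        rw [← hs', hA'', hB'', ← himg, h]
        simp
      rw [hsing] at hs
      simp at hs
    rw [hempty]
    simp
  · rw [if_neg (fun hx => h ((intern_pair P p q).1 hx))]
    have hone : (P.parts.powersetCard 2).filter
        (fun s => ({p, q} : Finset V) ∈ delta2set s)
        = {({P.part p, P.part q} : Finset (Finset V))} := by
      ext s
      simp only [Finset.mem_filter, Finset.mem_singleton]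
      constructor
      · rintro ⟨hs, hmem⟩
        rw [Finset.mem_powersetCard] at hs
        rw [delta2set, Finset.mem_filter] at hmem
        obtain ⟨-, A', hA', B', hB', hs', hd⟩ := hmem
        rw [delta2, Finset.mem_filter] at hd
        obtain ⟨-, p', hp', q', hq', hpq'⟩ := hd
        have hA'' := part_eqq P (hs.1 hA') hp'
        have hB'' := part_eqq P (hs.1 hB') hq'
        have himg := congrArg (Finset.image P.part) hpq'
        simp only [Finset.image_insert, Finset.image_singleton] at himg
        rw [← hs', hA'', hB'', ← himg]
      · rintro rfl
        refine ⟨?_, ?_⟩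
        · rw [Finset.mem_powersetCard]
          refine ⟨?_, Finset.card_pair h⟩
          intro X hX
          rcases Finset.mem_insert.1 hX with rfl | hX
          · exact P.part_mem.2 (mem_univ p)
          · rw [Finset.mem_singleton] at hX; subst hX; exact P.part_mem.2 (mem_univ q)
        · rw [delta2set, Finset.mem_filter]
          have hep : ({p, q} : Finset V) ∈ pairs V := by
            rw [pairs, Finset.mem_powersetCard]; exact ⟨Finset.subset_univ _, he.2⟩
          refine ⟨hep, P.part p, Finset.mem_insert_self _ _, P.part q, by simp, rfl, ?_⟩
          rw [delta2, Finset.mem_filter]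
          exact ⟨hep, p, P.mem_part (mem_univ p), q, P.mem_part (mem_univ q), rfl⟩
    rw [hone]
    simp

lemma core_triple_21 (P : Finpartition (univ : Finset V)) (c : Finset V → ℝ)
    {p q r : V} (hpq : p ≠ q) (hpr : p ≠ r) (hqr : q ≠ r)
    (h2 : P.part p = P.part q) (h1 : P.part p ≠ P.part r) :
    (if ∀ e ∈ ({p, q, r} : Finset V).powersetCard 2, ∃ B ∈ P.parts, e ⊆ B
        then -2 * c {p, q, r} else 0)
      + 1/2 * (c {p, q, r} * (((({p, q, r} : Finset V).powersetCard 2).filter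
          fun e => ∃ B ∈ P.parts, e ⊆ B).card : ℝ))
      + 1/2 * c {p, q, r}
    = 1/2 * (c {p, q, r} * (((P.parts.powersetCard 3).filter
          fun s => ({p, q, r} : Finset V) ∈ T3set s).card : ℝ))
      + c {p, q, r} * ((((P.parts.sigma fun A => P.parts.erase A).filter
          fun x => ({p, q, r} : Finset V) ∈ T3 x.1 x.1 x.2).card : ℝ)) := by
  have ht3 : ({p, q, r} : Finset V).card = 3 := by
    rw [Finset.card_insert_of_notMem (by simp [hpq, hpr]), Finset.card_pair hqr]
  have httrip : ({p, q, r} : Finset V) ∈ triples V := by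
    rw [triples, Finset.mem_powersetCard]; exact ⟨Finset.subset_univ _, ht3⟩
  have hpc2 := pc2_triple hpq hpr hqr
  have ne1 : ({p, q} : Finset V) ≠ {p, r} := by
    intro h
    have : r ∈ ({p, q} : Finset V) := by rw [h]; simp
    simp only [Finset.mem_insert, Finset.mem_singleton] at this
    rcases this with h' | h'
    · exact hpr h'.symm
    · exact hqr h'.symm
  have ne2 : ({p, q} : Finset V) ≠ {q, r} := by
    intro h
    have : p ∈ ({q, r} : Finset V) := by rw [← h]; simp
    simp only [Finset.mem_insert, Finset.mem_singleton] at this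
    rcases this with h' | h'
    · exact hpq h'
    · exact hpr h'
  have ne3 : ({p, r} : Finset V) ≠ {q, r} := by
    intro h
    have : p ∈ ({q, r} : Finset V) := by rw [← h]; simp
    simp only [Finset.mem_insert, Finset.mem_singleton] at this
    rcases this with h' | h'
    · exact hpq h'
    · exact hpr h'
  have N3key : ∀ s ∈ (P.parts.powersetCard 3).filter
      (fun s => ({p, q, r} : Finset V) ∈ T3set s),
      s = {P.part p, P.part q, P.part r} := by
    intro s hs
    rw [Finset.mem_filter, Finset.mem_powersetCard] at hs
    obtain ⟨⟨hsub, hcard⟩, hmem⟩ := hs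
    rw [T3set, Finset.mem_filter] at hmem
    obtain ⟨-, X, hX, Y, hY, Z, hZ, hXYZ, hT⟩ := hmem
    obtain ⟨a, b, c', heq, -, -, -, hXa, hYb, hZc⟩ :=
      T3_sub P (hsub hX) (hsub hY) (hsub hZ) hpq hpr hqr hT
    have himg := congrArg (Finset.image P.part) heq
    simp only [Finset.image_insert, Finset.image_singleton] at himg
    rw [← hXYZ, hXa, hYb, hZc, himg]
  have Mkey : ∀ x ∈ (P.parts.sigma fun A => P.parts.erase A).filter
      (fun x => ({p, q, r} : Finset V) ∈ T3 x.1 x.1 x.2),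
      ∃ a b c' : V, ({a, b, c'} : Finset V) = {p, q, r} ∧ a ≠ b ∧ a ≠ c' ∧ b ≠ c' ∧
        x.1 = P.part a ∧ x.1 = P.part b ∧ x.2 = P.part c' ∧ x.2 ≠ x.1 := by
    intro x hx
    rw [Finset.mem_filter, Finset.mem_sigma] at hx
    obtain ⟨⟨h1m, h2m⟩, hT⟩ := hx
    have h2ne := Finset.ne_of_mem_erase h2m
    have h2m' := Finset.mem_of_mem_erase h2m
    obtain ⟨a, b, c', heq, hab, hac, hbc, hXa, hXb, hYc⟩ :=
      T3_sub P h1m h1m h2m' hpq hpr hqr hT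
    exact ⟨a, b, c', heq, hab, hac, hbc, hXa, hXb, hYc, h2ne⟩
  have hq2r : P.part q ≠ P.part r := fun h => h1 (h2.trans h)
  have hnall : ¬ ∀ e ∈ ({p, q, r} : Finset V).powersetCard 2,
      ∃ B ∈ P.parts, e ⊆ B := by
    intro hall
    exact h1 ((intern_pair P p r).1 (hall {p, r} (by rw [hpc2]; simp)))
  have hkcard : ((({p, q, r} : Finset V).powersetCard 2).filter
      (fun e => ∃ B ∈ P.parts, e ⊆ B)).card = 1 := by
    have : (({p, q, r} : Finset V).powersetCard 2).filter
        (fun e => ∃ B ∈ P.parts, e ⊆ B) = {({p, q} : Finset V)} := by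
      rw [hpc2]
      ext e
      simp only [Finset.mem_filter, Finset.mem_insert, Finset.mem_singleton]
      constructor
      · rintro ⟨rfl | rfl | rfl, hint⟩
        · rfl
        · exact absurd ((intern_pair P p r).1 hint) h1
        · exact absurd ((intern_pair P q r).1 hint) hq2r
      · rintro rfl
        exact ⟨Or.inl rfl, (intern_pair P p q).2 h2⟩
    rw [this, Finset.card_singleton]
  have hN3 : (P.parts.powersetCard 3).filter
      (fun s => ({p, q, r} : Finset V) ∈ T3set s) = ∅ := by
    rw [Finset.filter_eq_empty_iff]
    intro s hs hmem
    have hkey := N3key s (Finset.mem_filter.2 ⟨hs, hmem⟩)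
    rw [Finset.mem_powersetCard] at hs
    have hle : s.card ≤ 2 := by
      rw [hkey, ← h2, Finset.insert_idem]
      exact (Finset.card_insert_le _ _).trans (by simp)
    omega
  have hM : (P.parts.sigma fun A => P.parts.erase A).filter
      (fun x => ({p, q, r} : Finset V) ∈ T3 x.1 x.1 x.2)
      = {(⟨P.part p, P.part r⟩ : Σ _ : Finset V, Finset V)} := by
    ext x
    obtain ⟨X, Y⟩ := x
    simp only [Finset.mem_singleton]
    constructor
    · intro hx
      obtain ⟨a, b, c', heq, hab, hac, hbc, hXa, hXb, hYc, hne⟩ := Mkey ⟨X, Y⟩ hx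
      have ha : a = p ∨ a = q ∨ a = r := by
        have : a ∈ ({p, q, r} : Finset V) := by rw [← heq]; simp
        simpa using this
      have hb : b = p ∨ b = q ∨ b = r := by
        have : b ∈ ({p, q, r} : Finset V) := by rw [← heq]; simp
        simpa using this
      have hc : c' = p ∨ c' = q ∨ c' = r := by
        have : c' ∈ ({p, q, r} : Finset V) := by rw [← heq]; simp
        simpa using this
      obtain ⟨hap, hcr⟩ := pin21 P hpq hpr hqr h2 h1 ha hb hc hab hac hbc
        (hXa.symm.trans hXb)
      have e1 : X = P.part p := hXa.trans hap
      have e2 : Y = P.part r := by rw [hcr] at hYc; exact hYc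
      subst e1; subst e2; rfl
    · rintro h
      rw [Sigma.mk.inj_iff] at h
      obtain ⟨rfl, h'⟩ := h
      have : Y = P.part r := eq_of_heq h'
      subst this
      rw [Finset.mem_filter, Finset.mem_sigma]
      refine ⟨⟨P.part_mem.2 (mem_univ p), Finset.mem_erase.2
        ⟨fun hh => h1 hh.symm, P.part_mem.2 (mem_univ r)⟩⟩, ?_⟩
      rw [T3, Finset.mem_filter]
      refine ⟨httrip, p, P.mem_part (mem_univ p), q, ?_, r, P.mem_part (mem_univ r), rfl⟩
      rw [h2]; exact P.mem_part (mem_univ q)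
  rw [if_neg hnall, hkcard, hN3, hM]
  push_cast [Finset.card_empty, Finset.card_singleton]
  ring

lemma core_triple (P : Finpartition (univ : Finset V)) (c : Finset V → ℝ) {t : Finset V}
    (ht : t ∈ triples V) :
    (if ∀ e ∈ t.powersetCard 2, ∃ B ∈ P.parts, e ⊆ B then -2 * c t else 0)
      + 1/2 * (c t * (((t.powersetCard 2).filter fun e => ∃ B ∈ P.parts, e ⊆ B).card : ℝ))
      + 1/2 * c t
    = 1/2 * (c t * (((P.parts.powersetCard 3).filter fun s => t ∈ T3set s).card : ℝ))
      + c t * ((((P.parts.sigma fun A => P.parts.erase A).filter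
          fun q => t ∈ T3 q.1 q.1 q.2).card : ℝ)) := by
  rw [triples, Finset.mem_powersetCard] at ht
  obtain ⟨p, q, r, hpq, hpr, hqr, rfl⟩ := Finset.card_eq_three.1 ht.2
  have ht3 : ({p, q, r} : Finset V).card = 3 := by
    rw [Finset.card_insert_of_notMem (by simp [hpq, hpr]), Finset.card_pair hqr]
  have httrip : ({p, q, r} : Finset V) ∈ triples V := by
    rw [triples, Finset.mem_powersetCard]; exact ⟨Finset.subset_univ _, ht3⟩
  have hpc2 := pc2_triple hpq hpr hqr
  have ne1 : ({p, q} : Finset V) ≠ {p, r} := by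
    intro h
    have : r ∈ ({p, q} : Finset V) := by rw [h]; simp
    simp only [Finset.mem_insert, Finset.mem_singleton] at this
    rcases this with h' | h'
    · exact hpr h'.symm
    · exact hqr h'.symm
  have ne2 : ({p, q} : Finset V) ≠ {q, r} := by
    intro h
    have : p ∈ ({q, r} : Finset V) := by rw [← h]; simp
    simp only [Finset.mem_insert, Finset.mem_singleton] at this
    rcases this with h' | h'
    · exact hpq h'
    · exact hpr h'
  have ne3 : ({p, r} : Finset V) ≠ {q, r} := by
    intro h
    have : p ∈ ({q, r} : Finset V) := by rw [← h]; simp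
    simp only [Finset.mem_insert, Finset.mem_singleton] at this
    rcases this with h' | h'
    · exact hpq h'
    · exact hpr h'
  have N3key : ∀ s ∈ (P.parts.powersetCard 3).filter
      (fun s => ({p, q, r} : Finset V) ∈ T3set s),
      s = {P.part p, P.part q, P.part r} := by
    intro s hs
    rw [Finset.mem_filter, Finset.mem_powersetCard] at hs
    obtain ⟨⟨hsub, hcard⟩, hmem⟩ := hs
    rw [T3set, Finset.mem_filter] at hmem
    obtain ⟨-, X, hX, Y, hY, Z, hZ, hXYZ, hT⟩ := hmem
    obtain ⟨a, b, c', heq, -, -, -, hXa, hYb, hZc⟩ :=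
      T3_sub P (hsub hX) (hsub hY) (hsub hZ) hpq hpr hqr hT
    have himg := congrArg (Finset.image P.part) heq
    simp only [Finset.image_insert, Finset.image_singleton] at himg
    rw [← hXYZ, hXa, hYb, hZc, himg]
  have Mkey : ∀ x ∈ (P.parts.sigma fun A => P.parts.erase A).filter
      (fun x => ({p, q, r} : Finset V) ∈ T3 x.1 x.1 x.2),
      ∃ a b c' : V, ({a, b, c'} : Finset V) = {p, q, r} ∧ a ≠ b ∧ a ≠ c' ∧ b ≠ c' ∧
        x.1 = P.part a ∧ x.1 = P.part b ∧ x.2 = P.part c' ∧ x.2 ≠ x.1 := by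
    intro x hx
    rw [Finset.mem_filter, Finset.mem_sigma] at hx
    obtain ⟨⟨h1m, h2m⟩, hT⟩ := hx
    have h2ne := Finset.ne_of_mem_erase h2m
    have h2m' := Finset.mem_of_mem_erase h2m
    obtain ⟨a, b, c', heq, hab, hac, hbc, hXa, hXb, hYc⟩ :=
      T3_sub P h1m h1m h2m' hpq hpr hqr hT
    exact ⟨a, b, c', heq, hab, hac, hbc, hXa, hXb, hYc, h2ne⟩
  by_cases h2 : P.part p = P.part q
  · by_cases h1 : P.part p = P.part r
    · -- all three in the same block
      have partconst : ∀ v, v = p ∨ v = q ∨ v = r → P.part v = P.part p := by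
        rintro v (rfl | rfl | rfl)
        · rfl
        · exact h2.symm
        · exact h1.symm
      have hall : ∀ e ∈ ({p, q, r} : Finset V).powersetCard 2, ∃ B ∈ P.parts, e ⊆ B := by
        rw [hpc2]
        intro e he
        simp only [Finset.mem_insert, Finset.mem_singleton] at he
        rcases he with rfl | rfl | rfl
        · exact (intern_pair P _ _).2 h2
        · exact (intern_pair P _ _).2 h1
        · exact (intern_pair P _ _).2 (h2.symm.trans h1)
      have hkcard : ((({p, q, r} : Finset V).powersetCard 2).filter
          (fun e => ∃ B ∈ P.parts, e ⊆ B)).card = 3 := by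
        rw [Finset.filter_true_of_mem hall, hpc2,
          Finset.card_insert_of_notMem (by simp [ne1, ne2]), Finset.card_pair ne3]
      have hN3 : (P.parts.powersetCard 3).filter
          (fun s => ({p, q, r} : Finset V) ∈ T3set s) = ∅ := by
        rw [Finset.filter_eq_empty_iff]
        intro s hs hmem
        have hkey := N3key s (Finset.mem_filter.2 ⟨hs, hmem⟩)
        rw [Finset.mem_powersetCard] at hs
        have hle : s.card ≤ 2 := by
          rw [hkey, ← h2, ← h1]
          exact (Finset.card_insert_le _ _).trans (by simp)
        omega
      have hM : (P.parts.sigma fun A => P.parts.erase A).filter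
          (fun x => ({p, q, r} : Finset V) ∈ T3 x.1 x.1 x.2) = ∅ := by
        rw [Finset.filter_eq_empty_iff]
        intro x hx hmem
        obtain ⟨a, b, c', heq, hab, hac, hbc, hXa, hXb, hYc, hne⟩ :=
          Mkey x (Finset.mem_filter.2 ⟨hx, hmem⟩)
        have ha : a = p ∨ a = q ∨ a = r := by
          have : a ∈ ({p, q, r} : Finset V) := by rw [← heq]; simp
          simpa using this
        have hc : c' = p ∨ c' = q ∨ c' = r := by
          have : c' ∈ ({p, q, r} : Finset V) := by rw [← heq]; simp
          simpa using this
        exact hne (by rw [hYc, hXa, partconst a ha, partconst c' hc])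
      rw [if_pos hall, hkcard, hN3, hM]
      push_cast [Finset.card_empty, Finset.card_singleton]
      ring
    · -- part p = part q ≠ part r
      exact core_triple_21 P c hpq hpr hqr h2 h1
  · -- part p ≠ part q
    by_cases h1 : P.part p = P.part r
    · -- part p = part r ≠ part q : permute (p, q, r) ↦ (p, r, q)
      rw [show ({p, q, r} : Finset V) = {p, r, q} by
        rw [Finset.pair_comm q r]]
      exact core_triple_21 P c hpr hpq (Ne.symm hqr) h1 h2
    · by_cases hq2r : P.part q = P.part r
      · -- part q = part r ≠ part p : permute (p, q, r) ↦ (q, r, p)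
        rw [show ({p, q, r} : Finset V) = {q, r, p} by
          ext x
          simp only [Finset.mem_insert, Finset.mem_singleton]
          tauto]
        exact core_triple_21 P c hqr (Ne.symm hpq) (Ne.symm hpr) hq2r
          (fun h => h2 h.symm)
      · -- all distinct
        have hnall : ¬ ∀ e ∈ ({p, q, r} : Finset V).powersetCard 2,
            ∃ B ∈ P.parts, e ⊆ B := by
          intro hall
          exact h2 ((intern_pair P p q).1 (hall {p, q} (by rw [hpc2]; simp)))
        have hkcard : ((({p, q, r} : Finset V).powersetCard 2).filter
            (fun e => ∃ B ∈ P.parts, e ⊆ B)).card = 0 := by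
          rw [Finset.card_eq_zero, Finset.filter_eq_empty_iff, hpc2]
          intro e he
          simp only [Finset.mem_insert, Finset.mem_singleton] at he
          rcases he with rfl | rfl | rfl
          · exact fun hint => h2 ((intern_pair P p q).1 hint)
          · exact fun hint => h1 ((intern_pair P p r).1 hint)
          · exact fun hint => hq2r ((intern_pair P q r).1 hint)
        have hN3 : (P.parts.powersetCard 3).filter
            (fun s => ({p, q, r} : Finset V) ∈ T3set s)
            = {({P.part p, P.part q, P.part r} : Finset (Finset V))} := by
          ext s
          simp only [Finset.mem_singleton]
          constructor
          · intro hs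
            exact N3key s hs
          · rintro rfl
            rw [Finset.mem_filter, Finset.mem_powersetCard]
            refine ⟨⟨?_, ?_⟩, ?_⟩
            · intro X hX
              simp only [Finset.mem_insert, Finset.mem_singleton] at hX
              rcases hX with rfl | rfl | rfl
              · exact P.part_mem.2 (mem_univ p)
              · exact P.part_mem.2 (mem_univ q)
              · exact P.part_mem.2 (mem_univ r)
            · rw [Finset.card_insert_of_notMem (by simp [h2, h1]),
                Finset.card_pair hq2r]
            · rw [T3set, Finset.mem_filter]
              refine ⟨httrip, P.part p, by simp, P.part q, by simp, P.part r, by simp,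
                rfl, ?_⟩
              rw [T3, Finset.mem_filter]
              exact ⟨httrip, p, P.mem_part (mem_univ p), q, P.mem_part (mem_univ q),
                r, P.mem_part (mem_univ r), rfl⟩
        have hM : (P.parts.sigma fun A => P.parts.erase A).filter
            (fun x => ({p, q, r} : Finset V) ∈ T3 x.1 x.1 x.2) = ∅ := by
          rw [Finset.filter_eq_empty_iff]
          intro x hx hmem
          obtain ⟨a, b, c', heq, hab, hac, hbc, hXa, hXb, hYc, hne⟩ :=
            Mkey x (Finset.mem_filter.2 ⟨hx, hmem⟩)
          have ha : a = p ∨ a = q ∨ a = r := by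
            have : a ∈ ({p, q, r} : Finset V) := by rw [← heq]; simp
            simpa using this
          have hb : b = p ∨ b = q ∨ b = r := by
            have : b ∈ ({p, q, r} : Finset V) := by rw [← heq]; simp
            simpa using this
          exact pindist P h2 h1 hq2r ha hb hab (hXa.symm.trans hXb)
        rw [if_neg hnall, hkcard, hN3, hM]
        push_cast [Finset.card_empty, Finset.card_singleton]
        ring

end Aux

/--
Let `S` be a finite nonempty set and `c` a cost function.  Define `c'` by
`c'_∅ = ½ Σ_{binom(S,3)} c_{pqr} + Σ_{binom(S,2)} c_{pq}`,
`c'_{pq} = −c_{pq} + ½ Σ_{r ∈ S∖{p,q}} c_{pqr}`, and `c'_{pqr} = −2 c_{pqr}`.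
Then for every partition `𝓡` of `S`, with `x^𝓡` its feasible vector,
`φ_{c'}(x^𝓡) = ½ Σ_{{R,R',R''} ∈ binom(𝓡,3)} Σ_{T_{RR'R''}} c_{pqr}
  + Σ_{{R,R'} ∈ binom(𝓡,2)} Σ_{δ(R,R')} c_{pq}
  + Σ_{{R,R'} ∈ binom(𝓡,2)} ( Σ_{T_{RRR'}} c_{pqr} + Σ_{T_{RR'R'}} c_{pqr} )`.
(The last sum over unordered pairs of blocks, being symmetric, is written as the sum over
ordered pairs of distinct blocks of `Σ_{T_{AAB}} c_{pqr}`.)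
-/
theorem partition_subgraph_identity {V : Type*} [Fintype V] [DecidableEq V] [Nonempty V]
    (c c' : Finset V → ℝ)
    (hc'0 : c' ∅ = (1 / 2) * ∑ t ∈ triples V, c t + ∑ e ∈ pairs V, c e)
    (hc'2 : ∀ e ∈ pairs V, c' e = -c e + (1 / 2) * ∑ r ∈ univ \ e, c (insert r e))
    (hc'3 : ∀ t ∈ triples V, c' t = -2 * c t)
    (P : Finpartition (univ : Finset V)) :
    obj c' (partVec P) =
      (1 / 2) * ∑ s ∈ P.parts.powersetCard 3, ∑ t ∈ T3set s, c t
        + ∑ s ∈ P.parts.powersetCard 2, ∑ e ∈ delta2set s, c e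
        + ∑ A ∈ P.parts, ∑ B ∈ P.parts.erase A, ∑ t ∈ T3 A A B, c t := by
  classical
  -- rewrite LHS
  have L1 : ∑ t ∈ triples V, c' t * ∏ e ∈ t.powersetCard 2, partVec P e
      = ∑ t ∈ triples V,
          (if ∀ e ∈ t.powersetCard 2, ∃ B ∈ P.parts, e ⊆ B then -2 * c t else 0) := by
    refine Finset.sum_congr rfl fun t ht => ?_
    rw [hc'3 t ht]
    simp only [partVec, Finset.prod_boole]
    by_cases h : ∀ e ∈ t.powersetCard 2, ∃ B ∈ P.parts, e ⊆ B <;> simp [h]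
  have L2 : ∑ e ∈ pairs V, c' e * partVec P e
      = ∑ e ∈ pairs V, (-c e) * partVec P e
        + 1/2 * ∑ t ∈ triples V, c t *
            (((t.powersetCard 2).filter fun e => ∃ B ∈ P.parts, e ⊆ B).card : ℝ) := by
    have step1 : ∀ e ∈ pairs V, c' e * partVec P e
        = (-c e) * partVec P e + 1/2 * ∑ r ∈ univ \ e, c (insert r e) * partVec P e := by
      intro e he
      rw [hc'2 e he, ← Finset.sum_mul]
      ring
    rw [Finset.sum_congr rfl step1, Finset.sum_add_distrib, ← Finset.mul_sum,
      pair_triple_swap (fun e t => c t * partVec P e)]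
    congr 2
    refine Finset.sum_congr rfl fun t _ => ?_
    rw [← Finset.mul_sum]
    congr 1
    simp only [partVec]
    rw [Finset.sum_boole]
  -- rewrite RHS pieces
  have hT3 : ∀ A B C : Finset V, T3 A B C = (triples V).filter fun t => t ∈ T3 A B C := by
    intro A B C
    rw [Finset.filter_mem_eq_inter]
    exact (Finset.inter_eq_right.mpr (Finset.filter_subset _ _)).symm
  have hT3s : ∀ s, T3set (V := V) s = (triples V).filter fun t => t ∈ T3set s := by
    intro s
    rw [Finset.filter_mem_eq_inter]
    exact (Finset.inter_eq_right.mpr (Finset.filter_subset _ _)).symm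
  have hD2s : ∀ s, delta2set (V := V) s = (pairs V).filter fun e => e ∈ delta2set s := by
    intro s
    rw [Finset.filter_mem_eq_inter]
    exact (Finset.inter_eq_right.mpr (Finset.filter_subset _ _)).symm
  have R1 : ∑ s ∈ P.parts.powersetCard 3, ∑ t ∈ T3set s, c t
      = ∑ t ∈ triples V, c t *
          (((P.parts.powersetCard 3).filter fun s => t ∈ T3set s).card : ℝ) := by
    refine Eq.trans (Finset.sum_congr rfl fun s _ => ?_) (sum_filter_swap _ _ _ c)
    rw [← hT3s s]
  have R2 : ∑ s ∈ P.parts.powersetCard 2, ∑ e ∈ delta2set s, c e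
      = ∑ e ∈ pairs V, c e *
          (((P.parts.powersetCard 2).filter fun s => e ∈ delta2set s).card : ℝ) := by
    refine Eq.trans (Finset.sum_congr rfl fun s _ => ?_) (sum_filter_swap _ _ _ c)
    rw [← hD2s s]
  have R3 : ∑ A ∈ P.parts, ∑ B ∈ P.parts.erase A, ∑ t ∈ T3 A A B, c t
      = ∑ t ∈ triples V, c t *
          ((((P.parts.sigma fun A => P.parts.erase A).filter
              fun q => t ∈ T3 q.1 q.1 q.2).card : ℝ)) := by
    rw [Finset.sum_sigma' P.parts (fun A => P.parts.erase A)
      (fun A B => ∑ t ∈ T3 A A B, c t)]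
    refine Eq.trans (Finset.sum_congr rfl fun q _ => ?_) (sum_filter_swap _ _ _ c)
    rw [← hT3 q.1 q.1 q.2]
  rw [obj, L1, L2, hc'0, R1, R2, R3]
  have EQt : ∑ t ∈ triples V,
      ((if ∀ e ∈ t.powersetCard 2, ∃ B ∈ P.parts, e ⊆ B then -2 * c t else 0)
        + 1/2 * (c t * (((t.powersetCard 2).filter fun e => ∃ B ∈ P.parts, e ⊆ B).card : ℝ))
        + 1/2 * c t)
      = ∑ t ∈ triples V,
          (1/2 * (c t * (((P.parts.powersetCard 3).filter fun s => t ∈ T3set s).card : ℝ))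
            + c t * ((((P.parts.sigma fun A => P.parts.erase A).filter
                fun q => t ∈ T3 q.1 q.1 q.2).card : ℝ))) :=
    Finset.sum_congr rfl fun t ht => core_triple P c ht
  have EQe : ∑ e ∈ pairs V, ((-c e) * partVec P e + c e)
      = ∑ e ∈ pairs V, c e *
          (((P.parts.powersetCard 2).filter fun s => e ∈ delta2set s).card : ℝ) :=
    Finset.sum_congr rfl fun e he => by
      simp only [partVec]; exact core_pair P c he
  simp only [Finset.sum_add_distrib, Finset.mul_sum] at EQt EQe ⊢
  linear_combination EQt + EQe
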